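/- arXiv:2005.08103 — 5 statements merged into one kernel-verified Lean document; each statement's English description precedes it below -/
import Mathlib

section
/- Let X ∈ 𝒢(n,m,d₁,d₂) and fix u₁ ∈ [n], v₁ ∈ [m] with X_{u₁v₁} = 0. Let s_{u₁v₁} be the number of tuples (u₂, u₃, v₂, v₃) with u₂, u₃ ∈ [n] and v₂, v₃ ∈ [m] such that u₁, u₂, u₃ are pairwise distinct, v₁, v₂, v₃ are pairwise distinct, X_{u₁v₂} = X_{u₂v₁} = X_{u₃v₃} = 1, and X_{u₂v₃} = X_{u₃v₂} = 0 (i.e., (u₁,u₂,u₃,v₁,v₂,v₃) is a valid forward switching for X). Then d₁²·d₂·(n − 2d₂) ≤ s_{u₁v₁} ≤ d₁²·d₂·(n − d₂). -/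
open scoped Classical BigOperators

noncomputable section

/-- The set of biadjacency matrices of `(n,m,d₁,d₂)`-bipartite biregular graphs. -/
def BBG (n m d₁ d₂ : ℕ) : Finset (Fin n → Fin m → Bool) :=
  Finset.univ.filter fun X =>
    (∀ u, (∑ v, if X u v then 1 else 0) = d₁) ∧
    (∀ v, (∑ u, if X u v then 1 else 0) = d₂)

lemma card_filter_eq_sum_fst {α β : Type*} [Fintype α] [Fintype β] (r : α × β → Prop)
    [DecidablePred r] [∀ a : α, DecidablePred fun b => r (a, b)]
    (f : α → ℕ) (h : ∀ a, (Finset.univ.filter fun b => r (a, b)).card = f a) :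
    (Finset.univ.filter r).card = ∑ a, f a := by
  rw [Finset.card_filter, Fintype.sum_prod_type]
  refine Finset.sum_congr rfl fun a _ => ?_
  rw [← h a, Finset.card_filter]

lemma card_filter_eq_sum_snd {α β : Type*} [Fintype α] [Fintype β] (r : α × β → Prop)
    [DecidablePred r] [∀ b : β, DecidablePred fun a => r (a, b)]
    (f : β → ℕ) (h : ∀ b, (Finset.univ.filter fun a => r (a, b)).card = f b) :
    (Finset.univ.filter r).card = ∑ b, f b := by
  rw [Finset.card_filter, Fintype.sum_prod_type_right]
  refine Finset.sum_congr rfl fun b _ => ?_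
  rw [← h b, Finset.card_filter]

lemma sum_ite_card {α : Type*} [Fintype α] (p : α → Prop) [DecidablePred p] (c : ℕ) :
    (∑ a, if p a then c else 0) = (Finset.univ.filter p).card * c := by
  rw [Finset.card_filter, Finset.sum_mul]
  refine Finset.sum_congr rfl fun a _ => ?_
  split <;> simp

/-- Counting valid forward switchings: tuples `(u₂, u₃, v₂, v₃)` such that
`(u₁,u₂,u₃,v₁,v₂,v₃)` is a valid forward switching for `X`. -/
theorem forward_switching_count (n m d₁ d₂ : ℕ)
    (hn : 0 < n) (hm : 0 < m) (hd₁ : 0 < d₁) (hd₂ : 0 < d₂)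
    (hbal : n * d₁ = m * d₂)
    (X : Fin n → Fin m → Bool) (hX : X ∈ BBG n m d₁ d₂)
    (u₁ : Fin n) (v₁ : Fin m) (h₀ : X u₁ v₁ = false) :
    (d₁ : ℝ) ^ 2 * d₂ * ((n : ℝ) - 2 * d₂) ≤
      ((Finset.univ.filter fun t : Fin n × Fin n × Fin m × Fin m =>
          t.1 ≠ u₁ ∧ t.2.1 ≠ u₁ ∧ t.1 ≠ t.2.1 ∧
          t.2.2.1 ≠ v₁ ∧ t.2.2.2 ≠ v₁ ∧ t.2.2.1 ≠ t.2.2.2 ∧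
          X u₁ t.2.2.1 = true ∧ X t.1 v₁ = true ∧ X t.2.1 t.2.2.2 = true ∧
          X t.1 t.2.2.2 = false ∧ X t.2.1 t.2.2.1 = false).card : ℝ) ∧
    ((Finset.univ.filter fun t : Fin n × Fin n × Fin m × Fin m =>
          t.1 ≠ u₁ ∧ t.2.1 ≠ u₁ ∧ t.1 ≠ t.2.1 ∧
          t.2.2.1 ≠ v₁ ∧ t.2.2.2 ≠ v₁ ∧ t.2.2.1 ≠ t.2.2.2 ∧
          X u₁ t.2.2.1 = true ∧ X t.1 v₁ = true ∧ X t.2.1 t.2.2.2 = true ∧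
          X t.1 t.2.2.2 = false ∧ X t.2.1 t.2.2.1 = false).card : ℝ)
      ≤ (d₁ : ℝ) ^ 2 * d₂ * ((n : ℝ) - d₂) := by
  classical
  simp only [BBG, Finset.mem_filter, Finset.mem_univ, true_and] at hX
  have hrow : ∀ u, (Finset.univ.filter fun v => X u v = true).card = d₁ := by
    intro u
    rw [Finset.card_filter]
    simpa using hX.1 u
  have hcol : ∀ v, (Finset.univ.filter fun u => X u v = true).card = d₂ := by
    intro v
    rw [Finset.card_filter]
    simpa using hX.2 v
  have hd₂n : d₂ ≤ n := by
    have := Finset.card_filter_le Finset.univ (fun u => X u v₁ = true)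
    rw [hcol v₁] at this
    simpa using this
  set T := (Finset.univ.filter fun t : Fin n × Fin n × Fin m × Fin m =>
          t.1 ≠ u₁ ∧ t.2.1 ≠ u₁ ∧ t.1 ≠ t.2.1 ∧
          t.2.2.1 ≠ v₁ ∧ t.2.2.2 ≠ v₁ ∧ t.2.2.1 ≠ t.2.2.2 ∧
          X u₁ t.2.2.1 = true ∧ X t.1 v₁ = true ∧ X t.2.1 t.2.2.2 = true ∧
          X t.1 t.2.2.2 = false ∧ X t.2.1 t.2.2.1 = false) with hTdef
  set P := (Finset.univ.filter fun p : Fin n × Fin m =>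
      X p.1 v₁ = true ∧ X u₁ p.2 = true) with hPdef
  have hP : P.card = d₂ * d₁ := by
    have h1 := card_filter_eq_sum_fst
      (fun p : Fin n × Fin m => X p.1 v₁ = true ∧ X u₁ p.2 = true)
      (fun a => if X a v₁ = true then d₁ else 0) (fun a => by
        by_cases h : X a v₁ = true
        · simpa [h] using hrow u₁
        · simp [h])
    rw [hPdef, h1]
    rw [sum_ite_card, hcol v₁]
  -- fiber decomposition
  have hfib : T.card = ∑ p ∈ P, (T.filter fun t => (t.1, t.2.2.1) = p).card := by
    apply Finset.card_eq_sum_card_fiberwise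
    intro t ht
    rw [hTdef, Finset.mem_coe, Finset.mem_filter] at ht
    obtain ⟨-, h1, h2, h3, h4, h5, h6, h7, h8, h9, h10, h11⟩ := ht
    rw [hPdef, Finset.mem_coe, Finset.mem_filter]
    exact ⟨Finset.mem_univ _, h8, h7⟩
  -- per-fiber bounds
  have fiber_bounds : ∀ p ∈ P,
      ((n : ℝ) * d₁ - d₂ * d₁ - d₁ * d₂) ≤ ((T.filter fun t => (t.1, t.2.2.1) = p).card : ℝ) ∧
      ((T.filter fun t => (t.1, t.2.2.1) = p).card : ℝ) ≤ (n : ℝ) * d₁ - d₂ * d₁ := by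
    intro p hp
    rw [hPdef, Finset.mem_filter] at hp
    obtain ⟨-, hp1, hp2⟩ := hp
    set B := (Finset.univ.filter fun q : Fin n × Fin m =>
        X q.1 q.2 = true ∧ X q.1 p.2 = false) with hBdef
    set D := (Finset.univ.filter fun q : Fin n × Fin m =>
        X q.1 q.2 = true ∧ X p.1 q.2 = true) with hDdef
    set F := (T.filter fun t => (t.1, t.2.2.1) = p) with hFdef
    have hB : B.card = (n - d₂) * d₁ := by
      have h1 := card_filter_eq_sum_fst
        (fun q : Fin n × Fin m => X q.1 q.2 = true ∧ X q.1 p.2 = false)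
        (fun a => if X a p.2 = false then d₁ else 0) (fun a => by
          by_cases h : X a p.2 = false
          · simpa [h] using hrow a
          · simp [h])
      rw [hBdef, h1]
      rw [sum_ite_card]
      congr 1
      have h2 : (Finset.univ.filter fun a : Fin n => X a p.2 = false)
          = Finset.univ \ (Finset.univ.filter fun a => X a p.2 = true) := by
        ext a
        simp [Bool.not_eq_true]
      rw [h2, Finset.card_sdiff_of_subset (Finset.filter_subset _ _), hcol p.2, Finset.card_univ,
        Fintype.card_fin]
    have hD : D.card = d₁ * d₂ := by
      have h1 := card_filter_eq_sum_snd
        (fun q : Fin n × Fin m => X q.1 q.2 = true ∧ X p.1 q.2 = true)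
        (fun b => if X p.1 b = true then d₂ else 0) (fun b => by
          by_cases h : X p.1 b = true
          · simpa [h] using hcol b
          · simp [h])
      rw [hDdef, h1]
      rw [sum_ite_card, hrow p.1]
    -- upper bound : F injects into B
    have hFB : F.card ≤ B.card := by
      apply Finset.card_le_card_of_injOn (fun t => (t.2.1, t.2.2.2))
      · intro t ht
        obtain ⟨ht, hfix⟩ := Finset.mem_filter.mp (Finset.mem_coe.mp ht)
        rw [hTdef, Finset.mem_filter] at ht
        obtain ⟨-, h1, h2, h3, h4, h5, h6, h7, h8, h9, h10, h11⟩ := ht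
        have hfix2 : t.2.2.1 = p.2 := congrArg Prod.snd hfix
        rw [hBdef, Finset.mem_coe, Finset.mem_filter]
        exact ⟨Finset.mem_univ _, h9, hfix2 ▸ h11⟩
      · intro t ht t' ht' hdd
        obtain ⟨-, hfix⟩ := Finset.mem_filter.mp (Finset.mem_coe.mp ht)
        obtain ⟨-, hfix'⟩ := Finset.mem_filter.mp (Finset.mem_coe.mp ht')
        have e1 : t.1 = t'.1 := (congrArg Prod.fst hfix).trans (congrArg Prod.fst hfix').symm
        have e3 : t.2.2.1 = t'.2.2.1 := (congrArg Prod.snd hfix).trans (congrArg Prod.snd hfix').symm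
        have hdd' : (t.2.1, t.2.2.2) = (t'.2.1, t'.2.2.2) := hdd
        have e2 : t.2.1 = t'.2.1 := (Prod.ext_iff.mp hdd').1
        have e4 : t.2.2.2 = t'.2.2.2 := (Prod.ext_iff.mp hdd').2
        obtain ⟨a, b, c, d⟩ := t
        obtain ⟨a', b', c', d'⟩ := t'
        simp_all
    -- lower bound : B minus D-part injects into F
    have hne_row : ∀ {a b : Fin n} {v : Fin m}, X a v = true → X b v = false → a ≠ b := by
      intro a b v h1 h2 e
      subst e
      rw [h1] at h2
      cases h2
    have hne_col : ∀ {v w : Fin m} {a : Fin n}, X a v = true → X a w = false → v ≠ w := by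
      intro v w a h1 h2 e
      subst e
      rw [h1] at h2
      cases h2
    have hAF : (B.filter fun q => X p.1 q.2 = false).card ≤ F.card := by
      apply Finset.card_le_card_of_injOn (fun q => (p.1, q.1, p.2, q.2))
      · intro q hq
        obtain ⟨hqB, hq2⟩ := Finset.mem_filter.mp (Finset.mem_coe.mp hq)
        rw [hBdef, Finset.mem_filter] at hqB
        obtain ⟨-, he, hav₂⟩ := hqB
        rw [hFdef, Finset.mem_coe, Finset.mem_filter, hTdef, Finset.mem_filter]
        refine ⟨⟨Finset.mem_univ _, ?_, ?_, ?_, ?_, ?_, ?_, hp2, hp1, he, hq2, hav₂⟩, rfl⟩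
        · exact hne_row hp1 h₀
        · exact (hne_row hp2 hav₂).symm
        · exact (hne_row he hq2).symm
        · exact hne_col hp2 h₀
        · exact (hne_col hp1 hq2).symm
        · exact (hne_col he hav₂).symm
      · intro q _ q' _ hdd
        have e1 : q.1 = q'.1 := congrArg (fun t : Fin n × Fin n × Fin m × Fin m => t.2.1) hdd
        have e2 : q.2 = q'.2 := congrArg (fun t : Fin n × Fin n × Fin m × Fin m => t.2.2.2) hdd
        exact Prod.ext e1 e2
    have hsplit : B.card ≤ (B.filter fun q => X p.1 q.2 = false).card + D.card := by
      have h1 : (B.filter fun q => X p.1 q.2 = true).card ≤ D.card := by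
        apply Finset.card_le_card
        intro q hq
        obtain ⟨hqB, hq2⟩ := Finset.mem_filter.mp hq
        rw [hBdef, Finset.mem_filter] at hqB
        rw [hDdef, Finset.mem_filter]
        exact ⟨Finset.mem_univ _, hqB.2.1, hq2⟩
      have h2 := Finset.card_filter_add_card_filter_not
        (s := B) (p := fun q => X p.1 q.2 = true)
      have h3 : (B.filter fun q => ¬ X p.1 q.2 = true) = (B.filter fun q => X p.1 q.2 = false) := by
        ext q
        simp [Bool.not_eq_true]
      rw [h3] at h2
      omega
    -- combine
    have hBcast : (B.card : ℝ) = (n : ℝ) * d₁ - d₂ * d₁ := by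
      rw [hB]
      push_cast [Nat.cast_sub hd₂n]
      ring
    constructor
    · have h3 : ((B.filter fun q => X p.1 q.2 = false).card : ℝ) ≤ (F.card : ℝ) := by
        exact_mod_cast hAF
      have h4 : (B.card : ℝ) ≤ ((B.filter fun q => X p.1 q.2 = false).card : ℝ) + D.card := by
        exact_mod_cast hsplit
      rw [hBcast] at h4
      rw [hD] at h4
      push_cast at h4
      linarith
    · have h5 : (F.card : ℝ) ≤ (B.card : ℝ) := by exact_mod_cast hFB
      rw [hBcast] at h5
      linarith
  -- sum up
  have hTlow : (d₂ * d₁ : ℝ) * ((n : ℝ) * d₁ - d₂ * d₁ - d₁ * d₂) ≤ (T.card : ℝ) := by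
    rw [hfib]
    push_cast
    calc (d₂ * d₁ : ℝ) * ((n : ℝ) * d₁ - d₂ * d₁ - d₁ * d₂)
        = ∑ p ∈ P, ((n : ℝ) * d₁ - d₂ * d₁ - d₁ * d₂) := by
          rw [Finset.sum_const, hP]; push_cast; ring
      _ ≤ ∑ p ∈ P, ((T.filter fun t => (t.1, t.2.2.1) = p).card : ℝ) :=
          Finset.sum_le_sum fun p hp => (fiber_bounds p hp).1
  have hThigh : (T.card : ℝ) ≤ (d₂ * d₁ : ℝ) * ((n : ℝ) * d₁ - d₂ * d₁) := by
    rw [hfib]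
    push_cast
    calc (∑ p ∈ P, ((T.filter fun t => (t.1, t.2.2.1) = p).card : ℝ))
        ≤ ∑ p ∈ P, ((n : ℝ) * d₁ - d₂ * d₁) :=
          Finset.sum_le_sum fun p hp => (fiber_bounds p hp).2
      _ = (d₂ * d₁ : ℝ) * ((n : ℝ) * d₁ - d₂ * d₁) := by
          rw [Finset.sum_const, hP, nsmul_eq_mul]; push_cast; ring
  constructor
  · calc (d₁ : ℝ) ^ 2 * d₂ * ((n : ℝ) - 2 * d₂)
        = (d₂ * d₁ : ℝ) * ((n : ℝ) * d₁ - d₂ * d₁ - d₁ * d₂) := by ring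
      _ ≤ (T.card : ℝ) := hTlow
  · calc (T.card : ℝ) ≤ (d₂ * d₁ : ℝ) * ((n : ℝ) * d₁ - d₂ * d₁) := hThigh
      _ = (d₁ : ℝ) ^ 2 * d₂ * ((n : ℝ) - d₂) := by ring
end
end

section
/- Let X ∈ 𝒢(n,m,d₁,d₂) and fix u₁ ∈ [n], v₁ ∈ [m] with X_{u₁v₁} = 1. Let t_{u₁v₁} be the number of tuples (u₂, u₃, v₂, v₃) with u₂, u₃ ∈ [n] and v₂, v₃ ∈ [m] such that u₁, u₂, u₃ are pairwise distinct, v₁, v₂, v₃ are pairwise distinct, X_{u₂v₃} = X_{u₃v₂} = 1, and X_{u₁v₂} = X_{u₂v₁} = X_{u₃v₃} = 0 (i.e., (u₁,u₂,u₃,v₁,v₂,v₃) is a valid backward switching for X). Then d₁²·(n − d₂)·(n − 2d₂) ≤ t_{u₁v₁} ≤ d₁²·(n − d₂)². -/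
open scoped Classical BigOperators

noncomputable section

/-- Counting valid backward switchings: tuples `(u₂, u₃, v₂, v₃)` such that
`(u₁,u₂,u₃,v₁,v₂,v₃)` is a valid backward switching for `X`. -/
theorem backward_switching_count (n m d₁ d₂ : ℕ)
    (hn : 0 < n) (hm : 0 < m) (hd₁ : 0 < d₁) (hd₂ : 0 < d₂)
    (hbal : n * d₁ = m * d₂)
    (X : Fin n → Fin m → Bool) (hX : X ∈ BBG n m d₁ d₂)
    (u₁ : Fin n) (v₁ : Fin m) (h₁ : X u₁ v₁ = true) :
    (d₁ : ℝ) ^ 2 * ((n : ℝ) - d₂) * ((n : ℝ) - 2 * d₂) ≤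
      ((Finset.univ.filter fun t : Fin n × Fin n × Fin m × Fin m =>
          t.1 ≠ u₁ ∧ t.2.1 ≠ u₁ ∧ t.1 ≠ t.2.1 ∧
          t.2.2.1 ≠ v₁ ∧ t.2.2.2 ≠ v₁ ∧ t.2.2.1 ≠ t.2.2.2 ∧
          X t.1 t.2.2.2 = true ∧ X t.2.1 t.2.2.1 = true ∧
          X u₁ t.2.2.1 = false ∧ X t.1 v₁ = false ∧ X t.2.1 t.2.2.2 = false).card : ℝ) ∧
    ((Finset.univ.filter fun t : Fin n × Fin n × Fin m × Fin m =>
          t.1 ≠ u₁ ∧ t.2.1 ≠ u₁ ∧ t.1 ≠ t.2.1 ∧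
          t.2.2.1 ≠ v₁ ∧ t.2.2.2 ≠ v₁ ∧ t.2.2.1 ≠ t.2.2.2 ∧
          X t.1 t.2.2.2 = true ∧ X t.2.1 t.2.2.1 = true ∧
          X u₁ t.2.2.1 = false ∧ X t.1 v₁ = false ∧ X t.2.1 t.2.2.2 = false).card : ℝ)
      ≤ (d₁ : ℝ) ^ 2 * ((n : ℝ) - d₂) ^ 2 := by
  classical
  obtain ⟨-, hrow, hcol⟩ := Finset.mem_filter.mp hX
  have hrowc : ∀ u : Fin n, (Finset.univ.filter fun v => X u v = true).card = d₁ := by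
    intro u
    rw [Finset.card_filter]
    exact hrow u
  have hcolc : ∀ v : Fin m, (Finset.univ.filter fun u => X u v = true).card = d₂ := by
    intro v
    rw [Finset.card_filter]
    exact hcol v
  have hd₁m : d₁ ≤ m := by
    rw [← hrowc u₁]
    exact (Finset.card_filter_le _ _).trans (by simp)
  have hd₂n : d₂ ≤ n := by
    rw [← hcolc v₁]
    exact (Finset.card_filter_le _ _).trans (by simp)
  have hrowf : (Finset.univ.filter fun u : Fin n => X u v₁ = false).card = n - d₂ := by
    have h := Finset.card_filter_add_card_filter_not
      (s := (Finset.univ : Finset (Fin n))) (p := fun u => X u v₁ = true)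
    have he : (Finset.univ.filter fun u : Fin n => ¬ X u v₁ = true)
        = Finset.univ.filter fun u : Fin n => X u v₁ = false := by
      apply Finset.filter_congr
      intro u _
      simp
    rw [hcolc v₁, he, Finset.card_univ, Fintype.card_fin] at h
    omega
  have hcolf : (Finset.univ.filter fun v : Fin m => X u₁ v = false).card = m - d₁ := by
    have h := Finset.card_filter_add_card_filter_not
      (s := (Finset.univ : Finset (Fin m))) (p := fun v => X u₁ v = true)
    have he : (Finset.univ.filter fun v : Fin m => ¬ X u₁ v = true)
        = Finset.univ.filter fun v : Fin m => X u₁ v = false := by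
      apply Finset.filter_congr
      intro v _
      simp
    rw [hrowc u₁, he, Finset.card_univ, Fintype.card_fin] at h
    omega
  set A : Finset (Fin n × Fin m) :=
    Finset.univ.filter fun p => X p.1 p.2 = true ∧ X u₁ p.2 = false with hAdef
  set B : Finset (Fin n × Fin m) :=
    Finset.univ.filter fun p => X p.1 p.2 = true ∧ X p.1 v₁ = false with hBdef
  have hAcard : A.card = (m - d₁) * d₂ := by
    rw [hAdef, Finset.card_filter, Fintype.sum_prod_type_right]
    have key : ∀ v : Fin m, (∑ u : Fin n, if X u v = true ∧ X u₁ v = false then 1 else 0)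
        = if X u₁ v = false then d₂ else 0 := by
      intro v
      by_cases h : X u₁ v = false
      · have h2 : ∀ u : Fin n, (if X u v = true ∧ X u₁ v = false then (1:ℕ) else 0)
            = if X u v = true then 1 else 0 := fun u => by simp [h]
        rw [Finset.sum_congr rfl fun u _ => h2 u, ← Finset.card_filter, hcolc, if_pos h]
      · simp [h]
    rw [Finset.sum_congr rfl fun v _ => key v, ← Finset.sum_filter, Finset.sum_const,
      hcolf, smul_eq_mul]
  have hBcard : B.card = (n - d₂) * d₁ := by
    rw [hBdef, Finset.card_filter, Fintype.sum_prod_type]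
    have key : ∀ u : Fin n, (∑ v : Fin m, if X u v = true ∧ X u v₁ = false then 1 else 0)
        = if X u v₁ = false then d₁ else 0 := by
      intro u
      by_cases h : X u v₁ = false
      · have h2 : ∀ v : Fin m, (if X u v = true ∧ X u v₁ = false then (1:ℕ) else 0)
            = if X u v = true then 1 else 0 := fun v => by simp [h]
        rw [Finset.sum_congr rfl fun v _ => h2 v, ← Finset.card_filter, hrowc, if_pos h]
      · simp [h]
    rw [Finset.sum_congr rfl fun u _ => key u, ← Finset.sum_filter, Finset.sum_const,
      hrowf, smul_eq_mul]
  have hAB : (m - d₁) * d₂ = (n - d₂) * d₁ := by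
    rw [Nat.sub_mul, Nat.sub_mul, ← hbal, Nat.mul_comm d₁ d₂]
  set G : Finset ((Fin n × Fin m) × (Fin n × Fin m)) :=
    (A ×ˢ B).filter fun pq => X pq.1.1 pq.2.2 = false with hGdef
  set Bad : Finset ((Fin n × Fin m) × (Fin n × Fin m)) :=
    (A ×ˢ B).filter fun pq => ¬ X pq.1.1 pq.2.2 = false with hBaddef
  set T : Finset (Fin n × Fin n × Fin m × Fin m) :=
    Finset.univ.filter fun t : Fin n × Fin n × Fin m × Fin m =>
      t.1 ≠ u₁ ∧ t.2.1 ≠ u₁ ∧ t.1 ≠ t.2.1 ∧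
      t.2.2.1 ≠ v₁ ∧ t.2.2.2 ≠ v₁ ∧ t.2.2.1 ≠ t.2.2.2 ∧
      X t.1 t.2.2.2 = true ∧ X t.2.1 t.2.2.1 = true ∧
      X u₁ t.2.2.1 = false ∧ X t.1 v₁ = false ∧ X t.2.1 t.2.2.2 = false with hTdef
  have hTG : T.card = G.card := by
    refine Finset.card_bij' (fun t _ => ((t.2.1, t.2.2.1), (t.1, t.2.2.2)))
      (fun pq _ => (pq.2.1, pq.1.1, pq.1.2, pq.2.2)) ?_ ?_ (fun t ht => rfl) (fun pq hpq => rfl)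
    · intro t ht
      simp only [hTdef, Finset.mem_filter, Finset.mem_univ, true_and] at ht
      obtain ⟨h1, h2, h3, h4, h5, h6, h7, h8, h9, h10, h11⟩ := ht
      simp only [hGdef, hAdef, hBdef, Finset.mem_filter, Finset.mem_product,
        Finset.mem_univ, true_and]
      exact ⟨⟨⟨h8, h9⟩, ⟨h7, h10⟩⟩, h11⟩
    · intro pq hpq
      simp only [hGdef, hAdef, hBdef, Finset.mem_filter, Finset.mem_product,
        Finset.mem_univ, true_and] at hpq
      obtain ⟨⟨⟨hA1, hA2⟩, hB1, hB2⟩, hF⟩ := hpq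
      simp only [hTdef, Finset.mem_filter, Finset.mem_univ, true_and]
      refine ⟨fun h => ?_, fun h => ?_, fun h => ?_, fun h => ?_, fun h => ?_, fun h => ?_,
        hB1, hA1, hA2, hB2, hF⟩
      · rw [h, h₁] at hB2; exact Bool.noConfusion hB2
      · rw [h, hA2] at hA1; exact Bool.noConfusion hA1
      · rw [h, hF] at hB1; exact Bool.noConfusion hB1
      · rw [h, h₁] at hA2; exact Bool.noConfusion hA2
      · rw [h, hB2] at hB1; exact Bool.noConfusion hB1
      · rw [h, hF] at hA1; exact Bool.noConfusion hA1
  have hsplit : G.card + Bad.card = A.card * B.card := by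
    rw [hGdef, hBaddef, Finset.card_filter_add_card_filter_not, Finset.card_product]
  have hC : ∀ w : Fin m,
      (Finset.univ.filter fun p : Fin n × Fin m => X p.1 w = true ∧ X p.1 p.2 = true).card
        = d₂ * d₁ := by
    intro w
    rw [Finset.card_filter, Fintype.sum_prod_type]
    have key : ∀ u : Fin n, (∑ v : Fin m, if X u w = true ∧ X u v = true then 1 else 0)
        = if X u w = true then d₁ else 0 := by
      intro u
      by_cases h : X u w = true
      · have h2 : ∀ v : Fin m, (if X u w = true ∧ X u v = true then (1:ℕ) else 0)
            = if X u v = true then 1 else 0 := fun v => by simp [h]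
        rw [Finset.sum_congr rfl fun v _ => h2 v, ← Finset.card_filter, hrowc, if_pos h]
      · simp [h]
    rw [Finset.sum_congr rfl fun u _ => key u, ← Finset.sum_filter, Finset.sum_const,
      hcolc, smul_eq_mul]
  have hBad : Bad.card ≤ B.card * (d₂ * d₁) := by
    have hfib : Bad.card = ∑ q ∈ B, (Bad.filter fun pq => pq.2 = q).card := by
      apply Finset.card_eq_sum_card_fiberwise
      intro pq hpq
      rw [hBaddef] at hpq
      exact (Finset.mem_product.mp (Finset.mem_filter.mp hpq).1).2
    rw [hfib]
    have hq : ∀ q ∈ B, (Bad.filter fun pq => pq.2 = q).card ≤ d₂ * d₁ := by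
      intro q hqB
      have hsub : (Bad.filter fun pq => pq.2 = q).card ≤
          (Finset.univ.filter fun p : Fin n × Fin m =>
            X p.1 q.2 = true ∧ X p.1 p.2 = true).card := by
        apply Finset.card_le_card_of_injOn (fun pq => pq.1)
        · intro pq hpq
          simp only [Finset.mem_coe, Finset.mem_filter] at hpq
          obtain ⟨hb, hq2⟩ := hpq
          rw [hBaddef, Finset.mem_filter, Finset.mem_product] at hb
          obtain ⟨⟨hpA, hpB⟩, hbad⟩ := hb
          rw [hAdef, Finset.mem_filter] at hpA
          have htrue : X pq.1.1 pq.2.2 = true := by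
            revert hbad; cases X pq.1.1 pq.2.2 <;> simp
          simp only [Finset.mem_coe, Finset.mem_filter, Finset.mem_univ, true_and]
          exact ⟨hq2 ▸ htrue, hpA.2.1⟩
        · intro a ha b hb hab
          simp only [Finset.mem_coe, Finset.mem_filter] at ha hb
          exact Prod.ext hab (ha.2.trans hb.2.symm)
      exact hsub.trans_eq (hC q.2)
    calc ∑ q ∈ B, (Bad.filter fun pq => pq.2 = q).card
        ≤ ∑ _q ∈ B, d₂ * d₁ := Finset.sum_le_sum hq
      _ = B.card * (d₂ * d₁) := by rw [Finset.sum_const, smul_eq_mul]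
  -- assemble
  have hT1 : T.card + Bad.card = ((n - d₂) * d₁) * ((n - d₂) * d₁) := by
    rw [hTG, hsplit, hAcard, hBcard, hAB]
  have hBad' : Bad.card ≤ ((n - d₂) * d₁) * (d₂ * d₁) := by
    rw [hBcard] at hBad; exact hBad
  have hE : (((n - d₂) * d₁ : ℕ) : ℝ) = ((n : ℝ) - d₂) * d₁ := by
    rw [Nat.cast_mul, Nat.cast_sub hd₂n]
  have hR1 : (T.card : ℝ) + (Bad.card : ℝ)
      = (((n : ℝ) - d₂) * d₁) * (((n : ℝ) - d₂) * d₁) := by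
    rw [← hE]
    exact_mod_cast congrArg (fun k : ℕ => (k : ℝ)) hT1
  have hR2 : (Bad.card : ℝ) ≤ (((n : ℝ) - d₂) * d₁) * ((d₂ : ℝ) * d₁) := by
    rw [← hE]
    exact_mod_cast hBad'
  have hBnn : (0 : ℝ) ≤ (Bad.card : ℝ) := Nat.cast_nonneg _
  constructor
  · nlinarith [hR1, hR2]
  · nlinarith [hR1, hBnn]
end
end

section
/- Let X be drawn uniformly from the nonempty set 𝒢(n,m,d₁,d₂). For any fixed x ∈ S^{n−1} and y ∈ S₀^{m−1}, the light part f_{L(x,y)}(X) = Σ_{(u,v)∈L(x,y)} x_u·y_v·X_{uv} satisfies |𝔼 f_{L(x,y)}(X)| ≤ √d₁. -/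
open scoped Classical BigOperators

noncomputable section

/-- The light part of the bilinear form `⟨x, Xy⟩`:
the sum over pairs `(u,v)` with `|x_u·y_v| ≤ √d₁/m`. -/
def fLight {n m : ℕ} (d₁ : ℕ) (x : Fin n → ℝ) (y : Fin m → ℝ)
    (X : Fin n → Fin m → Bool) : ℝ :=
  ∑ q ∈ Finset.univ.filter
      (fun q : Fin n × Fin m => |x q.1 * y q.2| ≤ Real.sqrt d₁ / m),
    x q.1 * y q.2 * (if X q.1 q.2 then (1 : ℝ) else 0)

lemma BBG_perm_mem {n m d₁ d₂ : ℕ} (σ : Equiv.Perm (Fin m))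
    {X : Fin n → Fin m → Bool} (hX : X ∈ BBG n m d₁ d₂) :
    (fun u v => X u (σ v)) ∈ BBG n m d₁ d₂ := by
  simp only [BBG, Finset.mem_filter, Finset.mem_univ, true_and] at hX ⊢
  refine ⟨fun u => ?_, fun v => hX.2 (σ v)⟩
  exact (Equiv.sum_comp σ (fun v => if X u v then 1 else 0)).trans (hX.1 u)

/-- permuting columns is a bijection of `BBG` -/
def permE {n m : ℕ} (σ : Equiv.Perm (Fin m)) :
    (Fin n → Fin m → Bool) ≃ (Fin n → Fin m → Bool) where
  toFun X := fun u v => X u (σ⁻¹ v)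
  invFun X := fun u v => X u (σ v)
  left_inv X := by funext u v; simp
  right_inv X := by funext u v; simp

lemma sum_BBG_perm {n m d₁ d₂ : ℕ} (σ : Equiv.Perm (Fin m))
    (f : (Fin n → Fin m → Bool) → ℝ) :
    ∑ X ∈ BBG n m d₁ d₂, f X
      = ∑ X ∈ BBG n m d₁ d₂, f (fun u v => X u (σ v)) := by
  refine Finset.sum_equiv (permE σ) (fun X => ?_) (fun X hX => ?_)
  · constructor
    · intro h; exact BBG_perm_mem σ⁻¹ h
    · intro h
      have h2 := BBG_perm_mem (n := n) σ h
      simpa [permE] using h2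
  · congr 1
    funext u v
    simp [permE]

lemma col_const {n m d₁ d₂ : ℕ} (u : Fin n) (v v' : Fin m) :
    ∑ X ∈ BBG n m d₁ d₂, (if X u v then (1:ℝ) else 0)
      = ∑ X ∈ BBG n m d₁ d₂, (if X u v' then (1:ℝ) else 0) := by
  have h := sum_BBG_perm (n := n) (d₁ := d₁) (d₂ := d₂) (Equiv.swap v v')
      (fun X => if X u v' then (1:ℝ) else 0)
  simpa [Equiv.swap_apply_right] using h.symm

lemma col_sum {n m d₁ d₂ : ℕ} (_hm : 0 < m) (u : Fin n) (v : Fin m) :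
    (m : ℝ) * ∑ X ∈ BBG n m d₁ d₂, (if X u v then (1:ℝ) else 0)
      = d₁ * (BBG n m d₁ d₂).card := by
  have h1 : ∑ v' : Fin m, ∑ X ∈ BBG n m d₁ d₂, (if X u v' then (1:ℝ) else 0)
      = (m:ℝ) * ∑ X ∈ BBG n m d₁ d₂, (if X u v then (1:ℝ) else 0) := by
    rw [Finset.sum_congr rfl (fun v' _ => col_const u v' v)]
    simp [Finset.sum_const, mul_comm]
  rw [← h1, Finset.sum_comm]
  have h2 : ∀ X ∈ BBG n m d₁ d₂,
      ∑ v' : Fin m, (if X u v' then (1:ℝ) else 0) = (d₁ : ℝ) := by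
    intro X hX
    simp only [BBG, Finset.mem_filter, Finset.mem_univ, true_and] at hX
    exact_mod_cast hX.1 u
  rw [Finset.sum_congr rfl h2, Finset.sum_const, nsmul_eq_mul, mul_comm]

theorem light_part_mean_bound (n m d₁ d₂ : ℕ)
    (hn : 0 < n) (hm : 0 < m) (hd₁ : 0 < d₁) (hd₂ : 0 < d₂)
    (hbal : n * d₁ = m * d₂) (hne : (BBG n m d₁ d₂).Nonempty)
    (x : Fin n → ℝ) (hx : ∑ u, (x u) ^ 2 = 1)
    (y : Fin m → ℝ) (hy : ∑ v, (y v) ^ 2 = 1) (hy0 : ∑ v, y v = 0) :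
    |(∑ X ∈ BBG n m d₁ d₂, fLight d₁ x y X) / ((BBG n m d₁ d₂).card : ℝ)|
      ≤ Real.sqrt d₁ := by
  classical
  set L := Finset.univ.filter
      (fun q : Fin n × Fin m => |x q.1 * y q.2| ≤ Real.sqrt d₁ / m) with hLdef
  set Lc := Finset.univ.filter
      (fun q : Fin n × Fin m => ¬ |x q.1 * y q.2| ≤ Real.sqrt d₁ / m) with hLcdef
  have hcard : (0:ℝ) < (BBG n m d₁ d₂).card := by
    exact_mod_cast Finset.card_pos.mpr hne
  have hmR : (0:ℝ) < m := by exact_mod_cast hm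
  have hs : (0:ℝ) < Real.sqrt d₁ := Real.sqrt_pos.mpr (by exact_mod_cast hd₁)
  -- Step 1: compute the sum via symmetry
  have hsum : ∑ X ∈ BBG n m d₁ d₂, fLight d₁ x y X
      = ((d₁:ℝ) * (BBG n m d₁ d₂).card / m) * ∑ q ∈ L, x q.1 * y q.2 := by
    rw [Finset.mul_sum]
    unfold fLight
    rw [Finset.sum_comm]
    refine Finset.sum_congr rfl (fun q _ => ?_)
    rw [← Finset.mul_sum]
    have h := col_sum (n := n) (d₁ := d₁) (d₂ := d₂) hm q.1 q.2
    have h2 : ∑ X ∈ BBG n m d₁ d₂, (if X q.1 q.2 then (1:ℝ) else 0)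
        = (d₁:ℝ) * (BBG n m d₁ d₂).card / m := by
      rw [eq_div_iff hmR.ne', mul_comm]
      exact h
    rw [h2]; ring
  -- Step 2: bound the light sum
  have htot : ∑ q : Fin n × Fin m, x q.1 * y q.2 = 0 := by
    rw [← Finset.univ_product_univ, Finset.sum_product]
    simp [← Finset.mul_sum, hy0]
  have hsplit : ∑ q ∈ L, x q.1 * y q.2 = - ∑ q ∈ Lc, x q.1 * y q.2 := by
    have := Finset.sum_filter_add_sum_filter_not Finset.univ
      (fun q : Fin n × Fin m => |x q.1 * y q.2| ≤ Real.sqrt d₁ / m)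
      (fun q => x q.1 * y q.2)
    rw [htot] at this
    rw [hLdef, hLcdef]
    linarith [this]
  have hsq : ∑ q : Fin n × Fin m, (x q.1 * y q.2)^2 = 1 := by
    rw [← Finset.univ_product_univ, Finset.sum_product]
    simp only [mul_pow]
    rw [← Finset.sum_mul_sum]
    rw [hx, hy]; norm_num
  have hEach : ∀ q ∈ Lc, |x q.1 * y q.2| ≤ (x q.1 * y q.2)^2 * ((m:ℝ) / Real.sqrt d₁) := by
    intro q hq
    rw [hLcdef, Finset.mem_filter] at hq
    have h1 : Real.sqrt d₁ / m < |x q.1 * y q.2| := not_le.mp hq.2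
    have h1' : Real.sqrt d₁ < |x q.1 * y q.2| * m := (div_lt_iff₀ hmR).mp h1
    have h2 : |x q.1 * y q.2| * Real.sqrt d₁ ≤ |x q.1 * y q.2| * (|x q.1 * y q.2| * m) :=
      mul_le_mul_of_nonneg_left h1'.le (abs_nonneg _)
    rw [← sq_abs, ← mul_div_assoc, le_div_iff₀ hs]
    nlinarith [h2]
  have hT : |∑ q ∈ L, x q.1 * y q.2| ≤ (m:ℝ) / Real.sqrt d₁ := by
    rw [hsplit, abs_neg]
    calc |∑ q ∈ Lc, x q.1 * y q.2| ≤ ∑ q ∈ Lc, |x q.1 * y q.2| :=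
          Finset.abs_sum_le_sum_abs _ _
      _ ≤ ∑ q ∈ Lc, (x q.1 * y q.2)^2 * ((m:ℝ) / Real.sqrt d₁) :=
          Finset.sum_le_sum hEach
      _ = (∑ q ∈ Lc, (x q.1 * y q.2)^2) * ((m:ℝ) / Real.sqrt d₁) :=
          (Finset.sum_mul _ _ _).symm
      _ ≤ 1 * ((m:ℝ) / Real.sqrt d₁) := by
          refine mul_le_mul_of_nonneg_right ?_ (by positivity)
          rw [← hsq]
          exact Finset.sum_le_sum_of_subset_of_nonneg (Finset.filter_subset _ _)
            (fun q _ _ => sq_nonneg _)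
      _ = (m:ℝ) / Real.sqrt d₁ := one_mul _
  -- Step 3: put it together
  rw [hsum]
  have hrewrite : ((d₁:ℝ) * (BBG n m d₁ d₂).card / m) * (∑ q ∈ L, x q.1 * y q.2)
      / ((BBG n m d₁ d₂).card : ℝ)
      = ((d₁:ℝ)/m) * ∑ q ∈ L, x q.1 * y q.2 := by
    field_simp
  rw [hrewrite, abs_mul, abs_of_pos (by positivity : (0:ℝ) < (d₁:ℝ)/m)]
  calc (d₁:ℝ)/m * |∑ q ∈ L, x q.1 * y q.2| ≤ (d₁:ℝ)/m * ((m:ℝ) / Real.sqrt d₁) :=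
        mul_le_mul_of_nonneg_left hT (by positivity)
    _ = Real.sqrt d₁ := by
        rw [div_mul_div_comm, mul_comm ((m:ℝ)) (Real.sqrt d₁), ← div_mul_div_comm,
          div_self hmR.ne', mul_one, eq_comm, eq_div_iff hs.ne',
          Real.mul_self_sqrt (by positivity : (0:ℝ) ≤ (d₁:ℝ))]
end
end

section
/- Let X ∈ 𝒢(n,m,d₁,d₂) and fix distinct u₁, u₂ ∈ [n] and v₁ ∈ [m] with X_{u₁v₁} = 1 and X_{u₂v₁} = 0. Let s^{(1)}_{u₁u₂v₁} be the number of tuples (u₃, u₄, v₂, v₃) with u₃, u₄ ∈ [n], v₂, v₃ ∈ [m], u₃ ≠ u₁, X_{u₂v₂} = X_{u₃v₁} = X_{u₄v₃} = 1, and X_{u₃v₃} = X_{u₄v₂} = 0 (i.e., (u₁,u₂,u₃,u₄,v₁,v₂,v₃) is a valid Type 1 forward switching for X). Then d₁²·(d₂−1)·(n − 2d₂) ≤ s^{(1)}_{u₁u₂v₁} ≤ d₁²·(d₂−1)·(n − d₂). -/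
open scoped Classical BigOperators

noncomputable section

-- inner count upper bound
lemma countA_upper {n m d₁ d₂ : ℕ} (X : Fin n → Fin m → Bool)
    (hr : ∀ u, (∑ v, if X u v then 1 else 0) = d₁)
    (hc : ∀ v, (∑ u, if X u v then 1 else 0) = d₂)
    (u₃ : Fin n) (v₂ : Fin m) :
    (∑ u₄, ∑ v₃, if (X u₄ v₃ = true ∧ X u₃ v₃ = false ∧ X u₄ v₂ = false) then 1 else 0)
      + d₁ * d₂ ≤ n * d₁ := by
  have e1 : (∑ u₄ : Fin n, if X u₄ v₂ = true then d₁ else 0) = d₁ * d₂ := by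
    calc (∑ u₄ : Fin n, if X u₄ v₂ = true then d₁ else 0)
        = ∑ u₄ : Fin n, d₁ * (if X u₄ v₂ = true then 1 else 0) := by
          refine Finset.sum_congr rfl fun u _ => ?_; by_cases h : X u v₂ = true <;> simp [h]
      _ = d₁ * d₂ := by rw [← Finset.mul_sum, hc v₂]
  have e2 : (∑ u₄ : Fin n, if X u₄ v₂ = false then d₁ else 0) + d₁ * d₂ = n * d₁ := by
    rw [← e1, ← Finset.sum_add_distrib]
    calc (∑ u₄ : Fin n, ((if X u₄ v₂ = false then d₁ else 0) + if X u₄ v₂ = true then d₁ else 0))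
        = ∑ _u₄ : Fin n, d₁ := by
          refine Finset.sum_congr rfl fun u _ => ?_; by_cases h : X u v₂ = true <;> simp [h]
      _ = n * d₁ := by simp [Finset.sum_const, mul_comm]
  rw [← e2]
  refine Nat.add_le_add_right (Finset.sum_le_sum fun u₄ _ => ?_) _
  by_cases h : X u₄ v₂ = false
  · simp only [if_pos h]
    calc (∑ v₃, if (X u₄ v₃ = true ∧ X u₃ v₃ = false ∧ X u₄ v₂ = false) then 1 else 0)
        ≤ ∑ v₃, if X u₄ v₃ = true then 1 else 0 := by
          refine Finset.sum_le_sum fun v₃ _ => ?_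
          split_ifs with h1 h2 <;> simp_all
      _ = d₁ := hr u₄
  · simp [h]

-- inner count lower bound
lemma countA_lower {n m d₁ d₂ : ℕ} (X : Fin n → Fin m → Bool)
    (hr : ∀ u, (∑ v, if X u v then 1 else 0) = d₁)
    (hc : ∀ v, (∑ u, if X u v then 1 else 0) = d₂)
    (u₃ : Fin n) (v₂ : Fin m) :
    n * d₁ ≤ (∑ u₄, ∑ v₃, if (X u₄ v₃ = true ∧ X u₃ v₃ = false ∧ X u₄ v₂ = false) then 1 else 0)
      + d₁ * d₂ + d₁ * d₂ := by
  have T2 : (∑ u₄ : Fin n, ∑ v₃ : Fin m, if (X u₄ v₃ = true ∧ X u₃ v₃ = true) then 1 else 0)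
      = d₁ * d₂ := by
    rw [Finset.sum_comm]
    calc (∑ v₃ : Fin m, ∑ u₄ : Fin n, if (X u₄ v₃ = true ∧ X u₃ v₃ = true) then 1 else 0)
        = ∑ v₃ : Fin m, if X u₃ v₃ = true then d₂ else 0 := by
          refine Finset.sum_congr rfl fun v₃ _ => ?_
          by_cases h : X u₃ v₃ = true
          · simp only [h, and_true, if_pos]; exact hc v₃
          · simp [h]
      _ = ∑ v₃ : Fin m, d₂ * (if X u₃ v₃ = true then 1 else 0) := by
          refine Finset.sum_congr rfl fun v₃ _ => ?_; by_cases h : X u₃ v₃ = true <;> simp [h]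
      _ = d₁ * d₂ := by rw [← Finset.mul_sum, hr u₃, mul_comm]
  have T3 : (∑ u₄ : Fin n, ∑ v₃ : Fin m, if (X u₄ v₃ = true ∧ X u₄ v₂ = true) then 1 else 0)
      = d₁ * d₂ := by
    calc (∑ u₄ : Fin n, ∑ v₃ : Fin m, if (X u₄ v₃ = true ∧ X u₄ v₂ = true) then 1 else 0)
        = ∑ u₄ : Fin n, if X u₄ v₂ = true then d₁ else 0 := by
          refine Finset.sum_congr rfl fun u₄ _ => ?_
          by_cases h : X u₄ v₂ = true
          · simp only [h, and_true, if_pos]; exact hr u₄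
          · simp [h]
      _ = ∑ u₄ : Fin n, d₁ * (if X u₄ v₂ = true then 1 else 0) := by
          refine Finset.sum_congr rfl fun u₄ _ => ?_; by_cases h : X u₄ v₂ = true <;> simp [h]
      _ = d₁ * d₂ := by rw [← Finset.mul_sum, hc v₂]
  have lhs : (n : ℕ) * d₁ = ∑ u₄ : Fin n, ∑ v₃ : Fin m, if X u₄ v₃ = true then 1 else 0 := by
    calc n * d₁ = ∑ _u₄ : Fin n, d₁ := by simp [Finset.sum_const, mul_comm]
      _ = _ := by refine Finset.sum_congr rfl fun u₄ _ => (hr u₄).symm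
  rw [lhs]
  nth_rewrite 1 [← T2]
  rw [← T3, ← Finset.sum_add_distrib, ← Finset.sum_add_distrib]
  refine Finset.sum_le_sum fun u₄ _ => ?_
  rw [← Finset.sum_add_distrib, ← Finset.sum_add_distrib]
  refine Finset.sum_le_sum fun v₃ _ => ?_
  by_cases h1 : X u₄ v₃ = true <;> by_cases h2 : X u₃ v₃ = true <;>
    by_cases h3 : X u₄ v₂ = true <;> simp_all

/-- Counting valid Type 1 forward switchings: tuples `(u₃, u₄, v₂, v₃)` such that
`(u₁,u₂,u₃,u₄,v₁,v₂,v₃)` is a valid Type 1 forward switching for `X`. -/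
theorem type1_forward_switching_count (n m d₁ d₂ : ℕ)
    (hn : 0 < n) (hm : 0 < m) (hd₁ : 0 < d₁) (hd₂ : 0 < d₂)
    (hbal : n * d₁ = m * d₂)
    (X : Fin n → Fin m → Bool) (hX : X ∈ BBG n m d₁ d₂)
    (u₁ u₂ : Fin n) (hu : u₁ ≠ u₂) (v₁ : Fin m)
    (h₁ : X u₁ v₁ = true) (h₂ : X u₂ v₁ = false) :
    (d₁ : ℝ) ^ 2 * ((d₂ : ℝ) - 1) * ((n : ℝ) - 2 * d₂) ≤
      ((Finset.univ.filter fun t : Fin n × Fin n × Fin m × Fin m =>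
          t.1 ≠ u₁ ∧
          X u₂ t.2.2.1 = true ∧ X t.1 v₁ = true ∧ X t.2.1 t.2.2.2 = true ∧
          X t.1 t.2.2.2 = false ∧ X t.2.1 t.2.2.1 = false).card : ℝ) ∧
    ((Finset.univ.filter fun t : Fin n × Fin n × Fin m × Fin m =>
          t.1 ≠ u₁ ∧
          X u₂ t.2.2.1 = true ∧ X t.1 v₁ = true ∧ X t.2.1 t.2.2.2 = true ∧
          X t.1 t.2.2.2 = false ∧ X t.2.1 t.2.2.1 = false).card : ℝ)
      ≤ (d₁ : ℝ) ^ 2 * ((d₂ : ℝ) - 1) * ((n : ℝ) - d₂) := by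
  classical
  rw [BBG, Finset.mem_filter] at hX
  obtain ⟨-, hr, hc⟩ := hX
  set A : Fin n → Fin m → ℕ := fun u₃ v₂ =>
    ∑ u₄, ∑ v₃, if (X u₄ v₃ = true ∧ X u₃ v₃ = false ∧ X u₄ v₂ = false) then 1 else 0 with hA
  set P : Finset (Fin n × Fin m) :=
    Finset.univ.filter (fun p => p.1 ≠ u₁ ∧ X p.1 v₁ = true ∧ X u₂ p.2 = true) with hP
  have key : (Finset.univ.filter fun t : Fin n × Fin n × Fin m × Fin m =>
          t.1 ≠ u₁ ∧
          X u₂ t.2.2.1 = true ∧ X t.1 v₁ = true ∧ X t.2.1 t.2.2.2 = true ∧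
          X t.1 t.2.2.2 = false ∧ X t.2.1 t.2.2.1 = false).card
        = ∑ p ∈ P, A p.1 p.2 := by
    rw [Finset.card_filter, hP, Finset.sum_filter]
    simp only [Fintype.sum_prod_type]
    refine Finset.sum_congr rfl fun u₃ _ => ?_
    rw [Finset.sum_comm]
    refine Finset.sum_congr rfl fun v₂ _ => ?_
    by_cases q1 : u₃ ≠ u₁ <;> by_cases q2 : X u₃ v₁ = true <;> by_cases q3 : X u₂ v₂ = true <;>
      simp [hA, q1, q2, q3]
  -- cardinality of P
  have hq : (∑ u₃ : Fin n, if (u₃ ≠ u₁ ∧ X u₃ v₁ = true) then 1 else 0) + 1 = d₂ := by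
    have e : (∑ u₃ : Fin n, if (u₃ ≠ u₁ ∧ X u₃ v₁ = true) then (1:ℕ) else 0)
        = ∑ u₃ ∈ Finset.univ.erase u₁, if X u₃ v₁ = true then 1 else 0 := by
      rw [← Finset.sum_erase_add _ _ (Finset.mem_univ u₁)]
      simp only [if_neg (by simp : ¬(u₁ ≠ u₁ ∧ X u₁ v₁ = true)), add_zero]
      refine Finset.sum_congr rfl fun u hu' => ?_
      have := Finset.ne_of_mem_erase hu'
      simp [this]
    rw [e, ← hc v₁, ← Finset.sum_erase_add _ _ (Finset.mem_univ u₁), if_pos h₁]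
  have hPcard : P.card + d₁ = d₂ * d₁ := by
    have : P.card = (∑ u₃ : Fin n, if (u₃ ≠ u₁ ∧ X u₃ v₁ = true) then 1 else 0) * d₁ := by
      rw [hP, Finset.card_filter]
      simp only [Fintype.sum_prod_type]
      rw [Finset.sum_mul]
      refine Finset.sum_congr rfl fun u₃ _ => ?_
      by_cases q1 : u₃ ≠ u₁ <;> by_cases q2 : X u₃ v₁ = true <;>
        simp [q1, q2, hr u₂]
    rw [this, ← hq, add_mul, one_mul]
  -- bounds in ℝ
  have hcast : ∀ p ∈ P, ((n:ℝ) * d₁ - 2 * (d₁ * d₂)) ≤ (A p.1 p.2 : ℝ) ∧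
      (A p.1 p.2 : ℝ) ≤ (n:ℝ) * d₁ - d₁ * d₂ := by
    intro p _
    have hLo := countA_lower X hr hc p.1 p.2
    have hUp := countA_upper X hr hc p.1 p.2
    rw [hA]
    constructor
    · have := (Nat.cast_le (α := ℝ)).2 hLo
      push_cast at this ⊢
      linarith
    · have := (Nat.cast_le (α := ℝ)).2 hUp
      push_cast at this ⊢
      linarith
  have hcardR : (P.card : ℝ) = ((d₂:ℝ) - 1) * d₁ := by
    have := congrArg (fun k : ℕ => (k : ℝ)) hPcard
    push_cast at this
    linarith
  have hsum : ((∑ p ∈ P, A p.1 p.2 : ℕ) : ℝ) = ∑ p ∈ P, (A p.1 p.2 : ℝ) := by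
    push_cast; ring
  have hub : (∑ p ∈ P, (A p.1 p.2 : ℝ)) ≤ P.card * ((n:ℝ) * d₁ - d₁ * d₂) := by
    calc (∑ p ∈ P, (A p.1 p.2 : ℝ)) ≤ ∑ _p ∈ P, ((n:ℝ) * d₁ - d₁ * d₂) :=
          Finset.sum_le_sum fun p hp => (hcast p hp).2
      _ = P.card * ((n:ℝ) * d₁ - d₁ * d₂) := by rw [Finset.sum_const, nsmul_eq_mul]
  have hlb : P.card * ((n:ℝ) * d₁ - 2 * (d₁ * d₂)) ≤ ∑ p ∈ P, (A p.1 p.2 : ℝ) := by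
    calc (P.card : ℝ) * ((n:ℝ) * d₁ - 2 * (d₁ * d₂))
        = ∑ _p ∈ P, ((n:ℝ) * d₁ - 2 * (d₁ * d₂)) := by rw [Finset.sum_const, nsmul_eq_mul]
      _ ≤ _ := Finset.sum_le_sum fun p hp => (hcast p hp).1
  rw [key, hsum]
  have hd₂n : (1:ℝ) ≤ d₂ := by exact_mod_cast hd₂
  constructor
  · refine le_trans (le_of_eq ?_) hlb
    rw [hcardR]; ring
  · refine le_trans hub (le_of_eq ?_)
    rw [hcardR]; ring
end
end

section
/- Let X ∈ 𝒢(n,m,d₁,d₂) and fix distinct u₁, u₂ ∈ [n] and v₁ ∈ [m] with X_{u₁v₁} = 1 and X_{u₂v₁} = 1. Let t^{(1)}_{u₁u₂v₁} be the number of tuples (u₃, u₄, v₂, v₃) with u₃, u₄ ∈ [n], v₂, v₃ ∈ [m], X_{u₃v₃} = X_{u₄v₂} = 1, and X_{u₂v₂} = X_{u₃v₁} = X_{u₄v₃} = 0 (i.e., (u₁,u₂,u₃,u₄,v₁,v₂,v₃) is a valid Type 1 backward switching for X). Then d₁²·(n − d₂)·(n − 2d₂) ≤ t^{(1)}_{u₁u₂v₁}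 ≤ d₁²·(n − d₂)². -/
open scoped Classical BigOperators

noncomputable section

/-- Counting valid Type 1 backward switchings: tuples `(u₃, u₄, v₂, v₃)` such that
`(u₁,u₂,u₃,u₄,v₁,v₂,v₃)` is a valid Type 1 backward switching for `X`. -/
theorem type1_backward_switching_count (n m d₁ d₂ : ℕ)
    (hn : 0 < n) (hm : 0 < m) (hd₁ : 0 < d₁) (hd₂ : 0 < d₂)
    (hbal : n * d₁ = m * d₂)
    (X : Fin n → Fin m → Bool) (hX : X ∈ BBG n m d₁ d₂)
    (u₁ u₂ : Fin n) (hu : u₁ ≠ u₂) (v₁ : Fin m)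
    (h₁ : X u₁ v₁ = true) (h₂ : X u₂ v₁ = true) :
    (d₁ : ℝ) ^ 2 * ((n : ℝ) - d₂) * ((n : ℝ) - 2 * d₂) ≤
      ((Finset.univ.filter fun t : Fin n × Fin n × Fin m × Fin m =>
          X t.1 t.2.2.2 = true ∧ X t.2.1 t.2.2.1 = true ∧
          X u₂ t.2.2.1 = false ∧ X t.1 v₁ = false ∧ X t.2.1 t.2.2.2 = false).card : ℝ) ∧
    ((Finset.univ.filter fun t : Fin n × Fin n × Fin m × Fin m =>
          X t.1 t.2.2.2 = true ∧ X t.2.1 t.2.2.1 = true ∧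
          X u₂ t.2.2.1 = false ∧ X t.1 v₁ = false ∧ X t.2.1 t.2.2.2 = false).card : ℝ)
      ≤ (d₁ : ℝ) ^ 2 * ((n : ℝ) - d₂) ^ 2 := by
  classical
  simp only [BBG, Finset.mem_filter, Finset.mem_univ, true_and] at hX
  obtain ⟨hr, hc⟩ := hX
  have row : ∀ u : Fin n, (∑ v, if X u v = true then (1 : ℕ) else 0) = d₁ := by
    intro u; simpa using hr u
  have col : ∀ v : Fin m, (∑ u, if X u v = true then (1 : ℕ) else 0) = d₂ := by
    intro v; simpa using hc v
  have rowc : ∀ u : Fin n, (Finset.univ.filter fun v => X u v = true).card = d₁ := by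
    intro u; rw [Finset.card_filter]; exact row u
  have colc : ∀ v : Fin m, (Finset.univ.filter fun u => X u v = true).card = d₂ := by
    intro v; rw [Finset.card_filter]; exact col v
  have hd1m : d₁ ≤ m := by
    have := rowc u₁
    calc d₁ = (Finset.univ.filter fun v => X u₁ v = true).card := this.symm
      _ ≤ (Finset.univ : Finset (Fin m)).card := Finset.card_le_card (Finset.filter_subset _ _)
      _ = m := by simp
  have hd2n : d₂ ≤ n := by
    have := colc v₁
    calc d₂ = (Finset.univ.filter fun u => X u v₁ = true).card := this.symm
      _ ≤ (Finset.univ : Finset (Fin n)).card := Finset.card_le_card (Finset.filter_subset _ _)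
      _ = n := by simp
  have rowcf : ∀ u : Fin n, (Finset.univ.filter fun v => X u v = false).card = m - d₁ := by
    intro u
    have h2 : (Finset.univ.filter fun v => X u v = false) =
        Finset.univ \ (Finset.univ.filter fun v => X u v = true) := by
      ext v
      simp only [Finset.mem_filter, Finset.mem_univ, true_and, Finset.mem_sdiff]
      cases X u v <;> simp
    rw [h2, Finset.card_sdiff_of_subset (Finset.filter_subset _ _), rowc u, Finset.card_univ,
      Fintype.card_fin]
  have colcf : (Finset.univ.filter fun u => X u v₁ = false).card = n - d₂ := by
    have h2 : (Finset.univ.filter fun u => X u v₁ = false) =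
        Finset.univ \ (Finset.univ.filter fun u => X u v₁ = true) := by
      ext u
      simp only [Finset.mem_filter, Finset.mem_univ, true_and, Finset.mem_sdiff]
      cases X u v₁ <;> simp
    rw [h2, Finset.card_sdiff_of_subset (Finset.filter_subset _ _), colc v₁, Finset.card_univ,
      Fintype.card_fin]
  -- abbreviation for the big set
  set S : Finset (Fin n × Fin n × Fin m × Fin m) :=
    Finset.univ.filter fun t : Fin n × Fin n × Fin m × Fin m =>
      X t.1 t.2.2.2 = true ∧ X t.2.1 t.2.2.1 = true ∧
      X u₂ t.2.2.1 = false ∧ X t.1 v₁ = false ∧ X t.2.1 t.2.2.2 = false with hS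
  -- card as iterated sum, reordered
  have hcard : S.card = ∑ u₃ : Fin n, ∑ v₃ : Fin m, ∑ u₄ : Fin n, ∑ v₂ : Fin m,
      if X u₃ v₃ = true ∧ X u₄ v₂ = true ∧ X u₂ v₂ = false ∧ X u₃ v₁ = false ∧
        X u₄ v₃ = false then (1 : ℕ) else 0 := by
    rw [hS, Finset.card_filter]
    rw [Fintype.sum_prod_type]
    refine Finset.sum_congr rfl fun u₃ _ => ?_
    rw [Fintype.sum_prod_type]
    calc (∑ u₄ : Fin n, ∑ p : Fin m × Fin m,
          if X u₃ p.2 = true ∧ X u₄ p.1 = true ∧ X u₂ p.1 = false ∧ X u₃ v₁ = false ∧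
            X u₄ p.2 = false then (1 : ℕ) else 0)
        = ∑ u₄ : Fin n, ∑ v₂ : Fin m, ∑ v₃ : Fin m,
          if X u₃ v₃ = true ∧ X u₄ v₂ = true ∧ X u₂ v₂ = false ∧ X u₃ v₁ = false ∧
            X u₄ v₃ = false then (1 : ℕ) else 0 := by
          refine Finset.sum_congr rfl fun u₄ _ => ?_
          rw [Fintype.sum_prod_type]
      _ = ∑ u₄ : Fin n, ∑ v₃ : Fin m, ∑ v₂ : Fin m,
          if X u₃ v₃ = true ∧ X u₄ v₂ = true ∧ X u₂ v₂ = false ∧ X u₃ v₁ = false ∧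
            X u₄ v₃ = false then (1 : ℕ) else 0 := by
          exact Finset.sum_congr rfl fun u₄ _ => Finset.sum_comm
      _ = _ := Finset.sum_comm
  -- the "full" inner count
  have full : (∑ u₄ : Fin n, ∑ v₂ : Fin m,
      if X u₄ v₂ = true ∧ X u₂ v₂ = false then (1 : ℕ) else 0) = d₂ * (m - d₁) := by
    rw [Finset.sum_comm]
    have hpt : ∀ v₂ : Fin m, (∑ u₄ : Fin n,
        if X u₄ v₂ = true ∧ X u₂ v₂ = false then (1 : ℕ) else 0) =
        if X u₂ v₂ = false then d₂ else 0 := by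
      intro v₂
      by_cases h : X u₂ v₂ = false
      · rw [if_pos h, ← col v₂]
        exact Finset.sum_congr rfl fun u _ => by simp [h]
      · rw [if_neg h]
        exact Finset.sum_eq_zero fun u _ => by rw [if_neg]; tauto
    rw [Finset.sum_congr rfl fun v₂ _ => hpt v₂, ← Finset.sum_filter, Finset.sum_const,
      rowcf u₂, smul_eq_mul, mul_comm]
  -- inner upper bound
  have inner_up : ∀ (u₃ : Fin n) (v₃ : Fin m),
      (∑ u₄ : Fin n, ∑ v₂ : Fin m,
        if X u₃ v₃ = true ∧ X u₄ v₂ = true ∧ X u₂ v₂ = false ∧ X u₃ v₁ = false ∧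
          X u₄ v₃ = false then (1 : ℕ) else 0) ≤
      if X u₃ v₃ = true ∧ X u₃ v₁ = false then d₂ * (m - d₁) else 0 := by
    intro u₃ v₃
    by_cases hA : X u₃ v₃ = true ∧ X u₃ v₁ = false
    · rw [if_pos hA, ← full]
      refine Finset.sum_le_sum fun u₄ _ => Finset.sum_le_sum fun v₂ _ => ?_
      split_ifs with h1 h2
      · exact le_refl _
      · exact absurd ⟨h1.2.1, h1.2.2.1⟩ h2
      · exact Nat.zero_le _
      · exact le_refl _
    · rw [if_neg hA]
      refine le_of_eq (Finset.sum_eq_zero fun u₄ _ => Finset.sum_eq_zero fun v₂ _ => ?_)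
      rw [if_neg]; tauto
  -- the "bad" inner count bound
  have bad_le : ∀ v₃ : Fin m, (∑ u₄ : Fin n, ∑ v₂ : Fin m,
      if X u₄ v₂ = true ∧ X u₂ v₂ = false ∧ X u₄ v₃ = true then (1 : ℕ) else 0) ≤ d₂ * d₁ := by
    intro v₃
    have hpt : ∀ u₄ : Fin n, (∑ v₂ : Fin m,
        if X u₄ v₂ = true ∧ X u₂ v₂ = false ∧ X u₄ v₃ = true then (1 : ℕ) else 0) ≤
        if X u₄ v₃ = true then d₁ else 0 := by
      intro u₄
      by_cases h : X u₄ v₃ = true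
      · rw [if_pos h, ← row u₄]
        refine Finset.sum_le_sum fun v₂ _ => ?_
        split_ifs with h1 h2
        · exact le_refl _
        · exact absurd h1.1 h2
        · exact Nat.zero_le _
        · exact le_refl _
      · rw [if_neg h]
        refine le_of_eq (Finset.sum_eq_zero fun v₂ _ => ?_)
        rw [if_neg]; tauto
    calc (∑ u₄ : Fin n, ∑ v₂ : Fin m,
        if X u₄ v₂ = true ∧ X u₂ v₂ = false ∧ X u₄ v₃ = true then (1 : ℕ) else 0)
        ≤ ∑ u₄ : Fin n, if X u₄ v₃ = true then d₁ else 0 :=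
          Finset.sum_le_sum fun u₄ _ => hpt u₄
      _ = d₂ * d₁ := by
          rw [← Finset.sum_filter, Finset.sum_const, colc v₃, smul_eq_mul]
  -- inner lower bound
  have inner_lo : ∀ (u₃ : Fin n) (v₃ : Fin m),
      (if X u₃ v₃ = true ∧ X u₃ v₁ = false then d₂ * (m - d₁) - d₂ * d₁ else 0) ≤
      (∑ u₄ : Fin n, ∑ v₂ : Fin m,
        if X u₃ v₃ = true ∧ X u₄ v₂ = true ∧ X u₂ v₂ = false ∧ X u₃ v₁ = false ∧
          X u₄ v₃ = false then (1 : ℕ) else 0) := by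
    intro u₃ v₃
    by_cases hA : X u₃ v₃ = true ∧ X u₃ v₁ = false
    · rw [if_pos hA]
      have heq : (∑ u₄ : Fin n, ∑ v₂ : Fin m,
          if X u₃ v₃ = true ∧ X u₄ v₂ = true ∧ X u₂ v₂ = false ∧ X u₃ v₁ = false ∧
            X u₄ v₃ = false then (1 : ℕ) else 0) =
          ∑ u₄ : Fin n, ∑ v₂ : Fin m,
          if X u₄ v₂ = true ∧ X u₂ v₂ = false ∧ X u₄ v₃ = false then (1 : ℕ) else 0 := by
        refine Finset.sum_congr rfl fun u₄ _ => Finset.sum_congr rfl fun v₂ _ => ?_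
        simp [hA.1, hA.2, and_assoc]
      rw [heq]
      have hsplit : (∑ u₄ : Fin n, ∑ v₂ : Fin m,
          if X u₄ v₂ = true ∧ X u₂ v₂ = false then (1 : ℕ) else 0) =
          (∑ u₄ : Fin n, ∑ v₂ : Fin m,
            if X u₄ v₂ = true ∧ X u₂ v₂ = false ∧ X u₄ v₃ = false then (1 : ℕ) else 0) +
          (∑ u₄ : Fin n, ∑ v₂ : Fin m,
            if X u₄ v₂ = true ∧ X u₂ v₂ = false ∧ X u₄ v₃ = true then (1 : ℕ) else 0) := by
        rw [← Finset.sum_add_distrib]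
        refine Finset.sum_congr rfl fun u₄ _ => ?_
        rw [← Finset.sum_add_distrib]
        refine Finset.sum_congr rfl fun v₂ _ => ?_
        cases h : X u₄ v₃ <;> simp [h]
      have hb := bad_le v₃
      omega
    · rw [if_neg hA]
      exact Nat.zero_le _
  -- outer count identity
  have outer : ∀ c : ℕ, (∑ u₃ : Fin n, ∑ v₃ : Fin m,
      if X u₃ v₃ = true ∧ X u₃ v₁ = false then c else 0) = (n - d₂) * (d₁ * c) := by
    intro c
    have hpt : ∀ u₃ : Fin n, (∑ v₃ : Fin m,
        if X u₃ v₃ = true ∧ X u₃ v₁ = false then c else 0) =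
        if X u₃ v₁ = false then d₁ * c else 0 := by
      intro u₃
      by_cases h : X u₃ v₁ = false
      · rw [if_pos h]
        have : (∑ v₃ : Fin m, if X u₃ v₃ = true ∧ X u₃ v₁ = false then c else 0) =
            ∑ v₃ : Fin m, if X u₃ v₃ = true then c else 0 := by
          exact Finset.sum_congr rfl fun v₃ _ => by simp [h]
        rw [this, ← Finset.sum_filter, Finset.sum_const, rowc u₃, smul_eq_mul]
      · rw [if_neg h]
        exact Finset.sum_eq_zero fun v₃ _ => by rw [if_neg]; tauto
    rw [Finset.sum_congr rfl fun u₃ _ => hpt u₃, ← Finset.sum_filter, Finset.sum_const,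
      colcf, smul_eq_mul]
  -- ℕ-valued bounds on the cardinality
  have hUpper : S.card ≤ (n - d₂) * (d₁ * (d₂ * (m - d₁))) := by
    rw [hcard, ← outer (d₂ * (m - d₁))]
    exact Finset.sum_le_sum fun u₃ _ =>
      le_trans (Finset.sum_le_sum fun v₃ _ => inner_up u₃ v₃) (le_refl _)
  have hLower : (n - d₂) * (d₁ * (d₂ * (m - d₁) - d₂ * d₁)) ≤ S.card := by
    rw [hcard, ← outer (d₂ * (m - d₁) - d₂ * d₁)]
    exact Finset.sum_le_sum fun u₃ _ => Finset.sum_le_sum fun v₃ _ => inner_lo u₃ v₃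
  -- cast facts
  have hbalR : (n : ℝ) * d₁ = (m : ℝ) * d₂ := by exact_mod_cast hbal
  have natsub : ∀ a b : ℕ, (a : ℝ) - (b : ℝ) ≤ ((a - b : ℕ) : ℝ) := by
    intro a b
    rcases le_total b a with h | h
    · rw [Nat.cast_sub h]
    · rw [Nat.sub_eq_zero_of_le h, Nat.cast_zero]
      have : (a : ℝ) ≤ (b : ℝ) := by exact_mod_cast h
      linarith
  constructor
  · -- lower bound
    have hc1 : ((n - d₂ : ℕ) : ℝ) = (n : ℝ) - d₂ := by rw [Nat.cast_sub hd2n]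
    have hc2 : ((m - d₁ : ℕ) : ℝ) = (m : ℝ) - d₁ := by rw [Nat.cast_sub hd1m]
    have hL : (d₂ : ℝ) * ((m : ℝ) - d₁) - (d₂ : ℝ) * d₁ ≤
        ((d₂ * (m - d₁) - d₂ * d₁ : ℕ) : ℝ) := by
      have := natsub (d₂ * (m - d₁)) (d₂ * d₁)
      push_cast at this
      rw [hc2] at this
      linarith
    have hcast : (((n - d₂) * (d₁ * (d₂ * (m - d₁) - d₂ * d₁)) : ℕ) : ℝ) ≤ (S.card : ℝ) := by
      exact_mod_cast hLower
    rw [Nat.cast_mul, Nat.cast_mul, hc1] at hcast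
    refine le_trans ?_ hcast
    have ha : (0 : ℝ) ≤ (n : ℝ) - d₂ := by
      have : (d₂ : ℝ) ≤ n := by exact_mod_cast hd2n
      linarith
    have hd1' : (0 : ℝ) ≤ (d₁ : ℝ) := Nat.cast_nonneg _
    have hLe : (d₁ : ℝ) * ((n : ℝ) - 2 * d₂) ≤
        ((d₂ * (m - d₁) - d₂ * d₁ : ℕ) : ℝ) := by
      have : (d₁ : ℝ) * ((n : ℝ) - 2 * d₂) = (d₂ : ℝ) * ((m : ℝ) - d₁) - (d₂ : ℝ) * d₁ := by
        linear_combination hbalR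
      linarith [hL, this.le]
    calc (d₁ : ℝ) ^ 2 * ((n : ℝ) - d₂) * ((n : ℝ) - 2 * d₂)
        = ((n : ℝ) - d₂) * ((d₁ : ℝ) * ((d₁ : ℝ) * ((n : ℝ) - 2 * d₂))) := by ring
      _ ≤ ((n : ℝ) - d₂) * ((d₁ : ℝ) * ((d₂ * (m - d₁) - d₂ * d₁ : ℕ) : ℝ)) := by
          apply mul_le_mul_of_nonneg_left _ ha
          exact mul_le_mul_of_nonneg_left hLe hd1'
  · -- upper bound
    have hcast : (S.card : ℝ) ≤ (((n - d₂) * (d₁ * (d₂ * (m - d₁))) : ℕ) : ℝ) := by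
      exact_mod_cast hUpper
    refine le_trans hcast ?_
    rw [Nat.cast_mul, Nat.cast_mul, Nat.cast_mul, Nat.cast_sub hd2n, Nat.cast_sub hd1m]
    refine le_of_eq ?_
    linear_combination (-((n : ℝ) - d₂) * d₁) * hbalR
end
end
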